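/- arXiv:math/0311058 — 2 statements merged into one kernel-verified Lean document; each statement's English description precedes it below -/
import Mathlib

section
/- For the bigraded vector space V = ℂ[x,y] with char V = 1/((1−t₁)(1−t₂)), setting t₁ = e^{ℏ} and t₂ = e^{−ℏ}, the logarithm of Σ_n q^n char(Symⁿ V) expands as −ℏ^{−2} Σ_{d≥1} q^d/d³ − (1/12) log(1−q) + Σ_{g≥2} (B_{2g}/(2g(2g−2)!)) (Σ_{d≥1} d^{2g−3} q^d) ℏ^{2g−2}, where B_{2g} are Bernoulli numbers. -/
open PowerSeries

/-- The Laurent series field `ℚ((ℏ))` in which the coefficients live. -/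
noncomputable abbrev LK := LaurentSeries ℚ

/-- `e^{cℏ}` as a Laurent series in `ℏ`. -/
noncomputable def expH (c : ℚ) : LK :=
  HahnSeries.ofPowerSeries ℤ ℚ (PowerSeries.rescale c (PowerSeries.exp ℚ))

/-- The variable `ℏ` (a Laurent series). -/
noncomputable def hbar : LK := HahnSeries.ofPowerSeries ℤ ℚ PowerSeries.X

/-- `log(1−q) = −Σ_{d≥1} q^d / d`, as a power series in `q` with coefficients in `ℚ((ℏ))`. -/
noncomputable def logOneSubQ : PowerSeries LK :=
  PowerSeries.mk fun d => if d = 0 then 0 else -((d : LK))⁻¹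

namespace GenusAux

noncomputable def B : ℚ⟦X⟧ := bernoulliPowerSeries ℚ
noncomputable def U : ℚ⟦X⟧ := X * PowerSeries.derivative ℚ B - B

noncomputable def s (d : ℕ) : ℕ → ℚ := fun n =>
  if n ≠ 0 ∧ Even n then bernoulli (n + 2) / (((n : ℚ) + 2) * n.factorial) * (d : ℚ) ^ (n - 1)
  else 0

lemma coeff_B (n : ℕ) : coeff n B = bernoulli n / n.factorial := by
  simp [B, bernoulliPowerSeries]

lemma derivative_E : PowerSeries.derivative ℚ (exp ℚ) = exp ℚ := by
  ext n
  rw [PowerSeries.coeff_derivative]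
  simp only [coeff_exp, Algebra.algebraMap_self, RingHom.id_apply]
  rw [Nat.factorial_succ]
  have h1 : ((n.factorial : ℚ)) ≠ 0 := Nat.cast_ne_zero.mpr n.factorial_ne_zero
  have h2 : ((n : ℚ) + 1) ≠ 0 := by positivity
  push_cast
  field_simp

lemma deriv_bps : PowerSeries.derivative ℚ B * (exp ℚ - 1) + B * exp ℚ = 1 := by
  have h := congrArg (PowerSeries.derivative ℚ) (bernoulliPowerSeries_mul_exp_sub_one ℚ)
  rw [Derivation.leibniz] at h
  simp only [map_sub, Derivation.map_one_eq_zero, derivative_E, PowerSeries.derivative_X,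
    smul_eq_mul, sub_zero] at h
  unfold B
  linear_combination h

lemma keyA : U * (exp ℚ - 1) ^ 2 = -(X ^ 2) * exp ℚ := by
  have h1 : B * (exp ℚ - 1) = X := bernoulliPowerSeries_mul_exp_sub_one ℚ
  have h2 := deriv_bps
  unfold U
  linear_combination (X * (exp ℚ - 1)) * h2 + (-(exp ℚ - 1) - X * exp ℚ) * h1

lemma expProd (r : ℚ) : rescale r (exp ℚ) * rescale (-r) (exp ℚ) = 1 := by
  have h := congrArg (rescale r) (exp_mul_exp_neg_eq_one (A := ℚ))
  rw [map_mul, map_one] at h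
  rwa [show evalNegHom (exp ℚ) = rescale (-1 : ℚ) (exp ℚ) from rfl, rescale_rescale,
    neg_one_mul] at h

lemma keyC (r : ℚ) : rescale r U * ((1 - rescale r (exp ℚ)) * (1 - rescale (-r) (exp ℚ)))
    = (C r * X) ^ 2 := by
  have hA := congrArg (rescale r) keyA
  simp only [map_mul, map_neg, map_pow, map_sub, map_one, rescale_X] at hA
  have hP := expProd r
  linear_combination (-(rescale (-r) (exp ℚ))) * hA
    + ((C r * X) ^ 2 - rescale r U * (1 - rescale r (exp ℚ))) * hP

lemma keyE (d : ℕ) :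
    rescale (d : ℚ) U = C ((d : ℚ) ^ 2 / 12) * X ^ 2
      + C ((d : ℚ) ^ 3) * (X ^ 2 * PowerSeries.mk (s d)) - 1 := by
  ext n
  rw [coeff_rescale]
  rw [map_sub, map_add, coeff_one, coeff_C_mul, coeff_C_mul, coeff_X_pow_mul', coeff_X_pow,
    coeff_mk]
  rw [show (coeff n) U = coeff n (X * PowerSeries.derivative ℚ B) - coeff n B from
    map_sub _ _ _]
  rcases n with _ | (_ | (_ | m))
  · norm_num [coeff_zero_eq_constantCoeff, map_mul, coeff_B, s]
  · rw [coeff_succ_X_mul, PowerSeries.coeff_derivative, coeff_B]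
    norm_num [s]
  · rw [coeff_succ_X_mul, PowerSeries.coeff_derivative, coeff_B]
    have h2 : bernoulli 2 = 1/6 := by
      rw [bernoulli_eq_bernoulli'_of_ne_one (by norm_num), bernoulli'_two]
    norm_num [s, h2, Nat.factorial]
    ring
  · rw [coeff_succ_X_mul, PowerSeries.coeff_derivative, coeff_B]
    have hge : 2 ≤ m + 3 := by omega
    rw [if_pos hge, if_neg (by omega), if_neg (by omega)]
    rw [show m+1+1+1-2 = m+1 from by omega, mul_zero, zero_add, sub_zero]
    by_cases hm : Even (m + 1)
    · rw [s, if_pos ⟨by omega, hm⟩]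
      have hfac3 : ((m+3).factorial : ℚ) = ((m:ℚ)+3) * ((m:ℚ)+2) * (m+1).factorial := by
        rw [Nat.factorial_succ, Nat.factorial_succ]
        push_cast
        ring
      have hf1 : ((m+1).factorial : ℚ) ≠ 0 := Nat.cast_ne_zero.mpr (Nat.factorial_ne_zero _)
      have hm3 : ((m:ℚ)+3) ≠ 0 := by positivity
      have hm2 : ((m:ℚ)+2) ≠ 0 := by positivity
      push_cast [hfac3]
      field_simp
      ring
    · have hodd : bernoulli (m + 3) = 0 := by
        rw [bernoulli_eq_bernoulli'_of_ne_one (by omega)]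
        exact bernoulli'_eq_zero_of_odd (by simpa [Nat.even_add_one, parity_simps] using hm) (by omega)
      rw [s, if_neg (by tauto)]
      simp [hodd]

lemma hbar_ne : (hbar : LK) ≠ 0 := by
  rw [hbar, HahnSeries.ofPowerSeries_X]
  exact HahnSeries.single_ne_zero one_ne_zero

lemma natCast_ne (d : ℕ) (hd : d ≠ 0) : ((d : LK)) ≠ 0 := by
  have h : ((d : LK)) = HahnSeries.C ((d : ℚ)) := (map_natCast HahnSeries.C d).symm
  rw [h, HahnSeries.C_apply]
  exact HahnSeries.single_ne_zero (Nat.cast_ne_zero.mpr hd)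

lemma main (d : ℕ) (hd : d ≠ 0) :
    ((d : LK))⁻¹ * (((1 : LK) - expH d) * ((1 : LK) - expH (-d)))⁻¹ =
    -((hbar ^ 2)⁻¹ * (((d : LK)) ^ 3)⁻¹) - (12 : LK)⁻¹ * (-((d : LK))⁻¹)
      + HahnSeries.ofPowerSeries ℤ ℚ (PowerSeries.mk (s d)) := by
  set S : LK := HahnSeries.ofPowerSeries ℤ ℚ (PowerSeries.mk (s d)) with hSdef
  set F : LK := HahnSeries.ofPowerSeries ℤ ℚ (rescale (d : ℚ) U) with hFdef
  have hFM : F * ((1 - expH d) * (1 - expH (-d))) = ((d : LK) * hbar) ^ 2 := by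
    have h := congrArg (HahnSeries.ofPowerSeries ℤ ℚ) (keyC (d : ℚ))
    simp only [map_mul, map_sub, map_one, map_pow, HahnSeries.ofPowerSeries_C,
      map_natCast] at h
    simp only [expH, hbar, hFdef]
    exact h
  have hF : F = (d : LK) ^ 2 / 12 * hbar ^ 2 + (d : LK) ^ 3 * (hbar ^ 2 * S) - 1 := by
    have h := congrArg (HahnSeries.ofPowerSeries ℤ ℚ) (keyE d)
    simp only [map_add, map_sub, map_mul, map_one, map_pow, HahnSeries.ofPowerSeries_C,
      map_div₀, map_natCast, map_ofNat] at h
    simp only [hbar, hFdef, hSdef]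
    exact h
  have hh : hbar ≠ 0 := hbar_ne
  have hdL : ((d : LK)) ≠ 0 := natCast_ne d hd
  have hRHS : ((d : LK) * hbar) ^ 2 ≠ 0 := pow_ne_zero _ (mul_ne_zero hdL hh)
  have hM : ((1 : LK) - expH d) * ((1 : LK) - expH (-d)) ≠ 0 := by
    intro h0
    rw [h0, mul_zero] at hFM
    exact hRHS hFM.symm
  have hMinv : (((1 : LK) - expH d) * ((1 : LK) - expH (-d)))⁻¹ = F / ((d : LK) * hbar) ^ 2 := by
    rw [eq_div_iff hRHS, ← hFM, mul_comm F, ← mul_assoc, inv_mul_cancel₀ hM, one_mul]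
  rw [hMinv, hF]
  have h12 : (12 : LK) ≠ 0 := by
    have : ((12 : ℕ) : LK) ≠ 0 := natCast_ne 12 (by norm_num)
    simpa using this
  have h3 : ((d : LK)) ^ 3 ≠ 0 := pow_ne_zero _ hdL
  have hb2 : hbar ^ 2 ≠ 0 := pow_ne_zero _ hh
  have key : ((d : LK)) ^ 4 * hbar ^ 2 * (((d : LK))⁻¹) ^ 3 * (hbar⁻¹) ^ 2 = (d : LK) := by
    rw [inv_pow, inv_pow]
    field_simp
  field_simp
  linear_combination

lemma aux (a : LK) (f : ℕ → LK) (n : ℕ) :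
    (PowerSeries.coeff (R := LK) n) (-(PowerSeries.C (R := LK) a) * PowerSeries.mk f) = -(a * f n) := by
  calc (PowerSeries.coeff (R := LK) n) (-(PowerSeries.C (R := LK) a) * PowerSeries.mk f)
      = (PowerSeries.coeff (R := LK) n) (PowerSeries.C (R := LK) (-a) * PowerSeries.mk f) := by
        exact congrArg (PowerSeries.coeff (R := LK) n)
          (congrArg (· * PowerSeries.mk f) (map_neg (PowerSeries.C (R := LK)) a).symm)
    _ = -a * f n := by rw [coeff_C_mul, coeff_mk]
    _ = -(a * f n) := neg_mul a (f n)

end GenusAux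

/-- The Laurent expansion in `ℏ` of the generating function
`Σ_{d≥1} q^d / (d (1−e^{ℏd})(1−e^{−ℏd}))` (the logarithm of `Σ_n qⁿ char Symⁿ ℂ[x,y]` at
`t₁ = e^ℏ`, `t₂ = e^{−ℏ}`):
it equals `−ℏ^{−2} Σ_{d≥1} q^d/d³ − (1/12) log(1−q)
          + Σ_{g≥2} (B_{2g}/(2g(2g−2)!)) (Σ_{d≥1} d^{2g−3} q^d) ℏ^{2g−2}`,
stated as an identity of power series in `q` with coefficients in `ℚ((ℏ))`; the sum over
`g ≥ 2` is recorded coefficient-wise by the substitution `n = 2g − 2`. -/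
theorem genus_expansion_symmetric_products :
    (PowerSeries.mk fun d => if d = 0 then 0 else
        ((d : LK))⁻¹ * (((1 : LK) - expH d) * ((1 : LK) - expH (-d)))⁻¹) =
    -(PowerSeries.C (R := LK) ((hbar ^ 2)⁻¹)) *
        (PowerSeries.mk fun d => if d = 0 then 0 else (((d : LK)) ^ 3)⁻¹)
      - PowerSeries.C (R := LK) (12 : LK)⁻¹ * logOneSubQ
      + PowerSeries.mk (fun d => if d = 0 then 0 else
          HahnSeries.ofPowerSeries ℤ ℚ (PowerSeries.mk fun n =>
            if n ≠ 0 ∧ Even n then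
              bernoulli (n + 2) / (((n : ℚ) + 2) * n.factorial) * (d : ℚ) ^ (n - 1)
            else 0)) := by
  refine PowerSeries.ext fun n => ?_
  simp only [map_add, map_sub, coeff_mk, logOneSubQ, neg_mul, map_neg, coeff_C_mul]
  rcases eq_or_ne n 0 with rfl | hn
  · simp
  · simp only [if_neg hn]
    have h : ((n : LK))⁻¹ * (((1 : LK) - expH n) * ((1 : LK) - expH (-n)))⁻¹ =
        -((hbar ^ 2)⁻¹ * (((n : LK)) ^ 3)⁻¹) - (12 : LK)⁻¹ * (-((n : LK))⁻¹)
          + HahnSeries.ofPowerSeries ℤ ℚ (PowerSeries.mk fun k =>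
            if k ≠ 0 ∧ Even k then
              bernoulli (k + 2) / (((k : ℚ) + 2) * k.factorial) * (n : ℚ) ^ (k - 1)
            else 0) := GenusAux.main n hn
    convert h using 2
end

section
/- Jacobi theta function identity: for |q| < 1, θ₀₁(0,τ) = ∏_{d=1}^∞ (1−q^{2d})(1−q^{2d−1})², where θ₀₁(0,τ) = Σ_{n∈ℤ} (−1)ⁿ q^{n²} and q = e^{πiτ}. -/
open Finset Filter Topology

namespace JTP

/-- Gaussian binomial coefficient (in variable `a`) via Pascal recurrence. -/
def qb (a : ℂ) : ℕ → ℕ → ℂ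
  | 0, 0 => 1
  | 0, _+1 => 0
  | _+1, 0 => 1
  | m+1, k+1 => qb a m (k+1) + a ^ (m - k) * qb a m k

lemma qb_zero (a : ℂ) : ∀ {m k : ℕ}, m < k → qb a m k = 0 := by
  intro m
  induction m with
  | zero => intro k h; cases k with
    | zero => omega
    | succ k => rfl
  | succ m ih =>
    intro k h
    cases k with
    | zero => omega
    | succ k =>
      have h1 : m < k + 1 := by omega
      have h2 : m < k := by omega
      simp [qb, ih h1, ih h2]

lemma qb_zero_left (a : ℂ) (m : ℕ) : qb a m 0 = 1 := by cases m <;> rfl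

lemma qb_self (a : ℂ) (m : ℕ) : qb a m m = 1 := by
  induction m with
  | zero => rfl
  | succ m ih => simp [qb, qb_zero a (by omega : m < m + 1), ih]

/-- triangle numbers -/
def tri : ℕ → ℕ
  | 0 => 0
  | k + 1 => tri k + k

lemma tri_succ (k : ℕ) : tri (k + 1) = tri k + k := rfl

lemma two_tri (k : ℕ) : 2 * tri k = k * (k - 1) := by
  induction k with
  | zero => rfl
  | succ k ih =>
    rw [tri_succ, Nat.mul_add, ih]
    cases k with
    | zero => rfl
    | succ n => simp [Nat.succ_sub_one]; ring

/-- The Gauss binomial theorem (homogeneous form). -/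
lemma qbinom_thm (a u v : ℂ) (m : ℕ) :
    ∏ j ∈ range m, (u + a ^ j * v) =
      ∑ k ∈ range (m + 1), qb a m k * a ^ tri k * u ^ (m - k) * v ^ k := by
  induction m with
  | zero => simp [qb, tri]
  | succ m ih =>
    rw [prod_range_succ, ih, mul_add, sum_mul, sum_mul]
    have e1 : ∑ k ∈ range (m + 1), qb a m k * a ^ tri k * u ^ (m - k) * v ^ k * u
        = ∑ k ∈ range (m + 1), qb a m k * a ^ tri k * u ^ (m + 1 - k) * v ^ k := by
      refine sum_congr rfl fun k hk => ?_
      have hk' : k ≤ m := by simpa [Nat.lt_succ_iff] using hk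
      rw [show m + 1 - k = (m - k) + 1 from by omega, pow_succ]
      ring
    have e2 : ∑ k ∈ range (m + 1), qb a m k * a ^ tri k * u ^ (m - k) * v ^ k * (a ^ m * v)
        = ∑ k ∈ range (m + 1),
            a ^ (m - k) * qb a m k * a ^ tri (k + 1) * u ^ (m - k) * v ^ (k + 1) := by
      refine sum_congr rfl fun k hk => ?_
      have hk' : k ≤ m := by simpa [Nat.lt_succ_iff] using hk
      have : a ^ tri k * a ^ m = a ^ (m - k) * a ^ tri (k + 1) := by
        rw [← pow_add, ← pow_add, tri_succ]; congr 1; omega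
      calc qb a m k * a ^ tri k * u ^ (m - k) * v ^ k * (a ^ m * v)
          = qb a m k * (a ^ tri k * a ^ m) * u ^ (m - k) * v ^ (k + 1) := by ring
        _ = _ := by rw [this]; ring
    rw [e1, e2]
    -- now expand the RHS target
    rw [sum_range_succ' (fun k => qb a (m + 1) k * a ^ tri k * u ^ (m + 1 - k) * v ^ k) (m + 1)]
    have e3 : ∀ k ∈ range (m + 1),
        qb a (m + 1) (k + 1) * a ^ tri (k + 1) * u ^ (m + 1 - (k + 1)) * v ^ (k + 1)
        = qb a m (k + 1) * a ^ tri (k + 1) * u ^ (m - k) * v ^ (k + 1)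
          + a ^ (m - k) * qb a m k * a ^ tri (k + 1) * u ^ (m - k) * v ^ (k + 1) := by
      intro k hk
      show (qb a m (k+1) + a ^ (m - k) * qb a m k) * _ * _ * _ = _
      rw [show m + 1 - (k + 1) = m - k from by omega]
      ring
    rw [sum_congr rfl e3, sum_add_distrib]
    have e4 : ∑ k ∈ range (m + 1), qb a m (k+1) * a ^ tri (k+1) * u ^ (m - k) * v ^ (k+1)
        = ∑ k ∈ range (m + 1 + 1), qb a m k * a ^ tri k * u ^ (m + 1 - k) * v ^ k
          - qb a m 0 * a ^ tri 0 * u ^ (m + 1) * v ^ 0 := by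
      rw [sum_range_succ' (fun k => qb a m k * a ^ tri k * u ^ (m + 1 - k) * v ^ k) (m + 1)]
      have : ∀ k ∈ range (m + 1), qb a m (k+1) * a ^ tri (k+1) * u ^ (m + 1 - (k+1)) * v ^ (k+1)
          = qb a m (k+1) * a ^ tri (k+1) * u ^ (m - k) * v ^ (k+1) := by
        intro k hk; rw [show m + 1 - (k + 1) = m - k from by omega]
      rw [sum_congr rfl this]
      simp only [Nat.sub_zero]
      ring
    have e5 : ∑ k ∈ range (m + 1 + 1), qb a m k * a ^ tri k * u ^ (m + 1 - k) * v ^ k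
        = ∑ k ∈ range (m + 1), qb a m k * a ^ tri k * u ^ (m + 1 - k) * v ^ k := by
      rw [sum_range_succ, qb_zero a (by omega), zero_mul, zero_mul, zero_mul, add_zero]
    rw [e4, e5, qb_zero_left, qb_zero_left]
    simp only [Nat.sub_zero, pow_zero, tri]
    ring

/-- Product formula for the Gaussian binomial. -/
lemma qb_prod (a : ℂ) : ∀ m k : ℕ, k ≤ m →
    qb a m k * ∏ i ∈ range k, (1 - a ^ (i + 1)) = ∏ i ∈ range k, (1 - a ^ (m - k + i + 1)) := by
  intro m
  induction m with
  | zero => intro k hk; interval_cases k; simp [qb]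
  | succ m ih =>
    intro k hk
    cases k with
    | zero => simp [qb_zero_left]
    | succ k =>
      rcases Nat.lt_or_ge k m with h | h
      · -- k + 1 ≤ m
        have hk1 : k + 1 ≤ m := h
        have hkm : k ≤ m := by omega
        have H1 := ih (k+1) hk1
        have H2 := ih k hkm
        have hP1 : ∏ i ∈ range (k+1), (1 - a ^ (m - (k+1) + i + 1))
            = (∏ i ∈ range k, (1 - a ^ (m - k + i + 1))) * (1 - a ^ (m - k)) := by
          rw [prod_range_succ' (fun i => 1 - a ^ (m - (k+1) + i + 1)) k]
          congr 1
          · exact prod_congr rfl fun i _ => by congr 2; omega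
          · congr 2; omega
        rw [hP1, prod_range_succ (fun i => 1 - a ^ (i+1)) k] at H1
        have hT : ∏ i ∈ range (k+1), (1 - a ^ (m + 1 - (k+1) + i + 1))
            = (∏ i ∈ range k, (1 - a ^ (m - k + i + 1))) * (1 - a ^ (m + 1)) := by
          rw [prod_range_succ]
          congr 1
          · exact prod_congr rfl fun i _ => by congr 2; omega
          · congr 2; omega
        have hpow : a ^ (m - k) * a ^ (k + 1) = a ^ (m + 1) := by
          rw [← pow_add]; congr 1; omega
        show (qb a m (k+1) + a ^ (m - k) * qb a m k) * ∏ i ∈ range (k+1), (1 - a ^ (i+1)) = _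
        rw [hT, prod_range_succ (fun i => 1 - a ^ (i+1)) k]
        linear_combination H1 + a ^ (m - k) * (1 - a ^ (k+1)) * H2
          - (∏ i ∈ range k, (1 - a ^ (m - k + i + 1))) * hpow
      · -- k + 1 = m + 1
        have hkm : k = m := by omega
        subst hkm
        rw [qb_self, one_mul]
        congr 1
        ext i
        congr 2
        omega

end JTP

namespace JTP2
open JTP

/-- The finite Jacobi triple product identity (specialized at `y = -1`). -/
lemma finite_jtp (x : ℂ) (hx : x ≠ 0) (N : ℕ) :
    ∏ j ∈ range N, ((1 - x ^ (2*j+2)) * (1 - x ^ (2*j+1)) ^ 2) =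
      ∑ n ∈ Finset.Icc (-(N:ℤ)) (N:ℤ), (-1:ℂ) ^ n *
        ((∏ i ∈ range N, (1 - (x^2) ^ (i+1))) * qb (x^2) (2*N) (n + N).toNat) * x ^ (n^2) := by
  rcases Nat.eq_zero_or_pos N with rfl | hN
  · simp [qb]
  set a : ℂ := x ^ 2 with ha
  set P : ℂ := ∏ j ∈ range N, (1 - x ^ (2*j+1)) with hP
  set cN : ℕ := N*(N-1) + N*(2*N-1) with hcN
  -- Step 1: evaluate the product side of the Gauss binomial theorem
  have h1 : ∏ j ∈ range N, (x ^ (2*N-1) + a ^ j * (-1))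
      = (-1:ℂ) ^ N * x ^ (N*(N-1)) * P := by
    have e : ∀ j ∈ range N, (x ^ (2*N-1) + a ^ j * (-1))
        = (-1) * (x ^ (2*j) * (1 - x ^ (2*(N-1-j)+1))) := by
      intro j hj
      have hj' : j < N := mem_range.mp hj
      have : x ^ (2*N-1) = x ^ (2*j) * x ^ (2*(N-1-j)+1) := by
        rw [← pow_add]; congr 1; omega
      rw [this, ha, ← pow_mul]
      ring_nf
    have e2 : ∏ j ∈ range N, x ^ (2*j) = x ^ (N*(N-1)) := by
      rw [prod_pow_eq_pow_sum]
      congr 1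
      have := Finset.sum_range_id_mul_two N
      calc ∑ j ∈ range N, 2*j = (∑ j ∈ range N, j) * 2 := by
            rw [sum_mul]; exact sum_congr rfl fun j _ => by ring
        _ = N*(N-1) := this
    have e3 : ∏ j ∈ range N, (1 - x ^ (2*(N-1-j)+1)) = P := by
      rw [hP]; exact prod_range_reflect (fun j => 1 - x ^ (2*j+1)) N
    rw [prod_congr rfl e, prod_mul_distrib, prod_mul_distrib, prod_const, card_range, e2, e3]
    ring
  have h2 : ∏ j ∈ range N, (x ^ (2*N-1) + a ^ (N + j) * (-1))
      = x ^ (N*(2*N-1)) * P := by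
    have e : ∀ j ∈ range N, (x ^ (2*N-1) + a ^ (N+j) * (-1))
        = x ^ (2*N-1) * (1 - x ^ (2*j+1)) := by
      intro j hj
      have : a ^ (N+j) = x ^ (2*N-1) * x ^ (2*j+1) := by
        rw [ha, ← pow_mul, ← pow_add]; congr 1; omega
      rw [this]; ring
    rw [prod_congr rfl e, prod_mul_distrib, prod_const, card_range, ← pow_mul, hP,
      Nat.mul_comm]
  have hsplit := prod_range_add (fun j => x ^ (2*N-1) + a ^ j * (-1)) N N
  rw [show N + N = 2*N from (two_mul N).symm] at hsplit
  have lhsA : ∏ j ∈ range (2*N), (x ^ (2*N-1) + a ^ j * (-1))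
      = (-1:ℂ) ^ N * x ^ cN * P ^ 2 := by
    rw [hsplit]
    have h2' : ∏ j ∈ range N, (fun j => x ^ (2*N-1) + a ^ j * (-1)) (N + j)
        = x ^ (N*(2*N-1)) * P := h2
    rw [h1, h2', hcN, pow_add]
    ring
  -- Step 2: Gauss binomial theorem and exponent bookkeeping
  have key := qbinom_thm a (x ^ (2*N-1)) (-1) (2*N)
  rw [lhsA] at key
  have rterm : ∀ k ∈ range (2*N+1),
      qb a (2*N) k * a ^ tri k * (x ^ (2*N-1)) ^ (2*N-k) * (-1:ℂ) ^ k
      = (-1:ℂ) ^ k * qb a (2*N) k * (x ^ cN * x ^ (((k:ℤ) - N)^2)) := by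
    intro k hk
    have hk' : k ≤ 2*N := by simpa [Nat.lt_succ_iff] using hk
    have e1 : a ^ tri k * (x ^ (2*N-1)) ^ (2*N-k) = x ^ (2 * tri k + (2*N-1)*(2*N-k)) := by
      rw [ha, ← pow_mul, ← pow_mul, ← pow_add]
    have h2t : ((2 * tri k : ℕ) : ℤ) = (k:ℤ)^2 - (k:ℤ) := by
      rw [two_tri]
      rcases Nat.eq_zero_or_pos k with rfl | hk0
      · simp
      · push_cast [Nat.cast_sub hk0]
        ring
    have e2 : ((2 * tri k + (2*N-1)*(2*N-k) : ℕ) : ℤ) = cN + ((k:ℤ) - N)^2 := by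
      push_cast [Nat.cast_sub (by omega : 1 ≤ 2*N), Nat.cast_sub hk',
        Nat.cast_sub (by omega : 1 ≤ N), hcN] at h2t ⊢
      linear_combination h2t
    have e3 : (x:ℂ) ^ (2 * tri k + (2*N-1)*(2*N-k)) = x ^ cN * x ^ (((k:ℤ) - N)^2) := by
      have h4 : (x:ℂ) ^ (2 * tri k + (2*N-1)*(2*N-k))
          = x ^ ((2 * tri k + (2*N-1)*(2*N-k) : ℕ) : ℤ) := by
        rw [zpow_natCast]
      rw [h4, e2, zpow_add₀ hx, zpow_natCast]
    rw [mul_assoc (qb a (2*N) k), e1, e3]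
    ring
  rw [sum_congr rfl rterm] at key
  -- Step 3: cancel `x^cN` and move `(-1)^N`
  have hxc : (x:ℂ) ^ cN ≠ 0 := pow_ne_zero _ hx
  have hsign : ((-1:ℂ) ^ N) * ((-1:ℂ) ^ N) = 1 := by
    rw [← pow_add, ← two_mul, pow_mul]; norm_num
  have hfac : ∑ k ∈ range (2*N+1), (-1:ℂ)^k * qb a (2*N) k * (x^cN * x^(((k:ℤ)-N)^2))
      = x^cN * ∑ k ∈ range (2*N+1), (-1:ℂ)^k * qb a (2*N) k * x^(((k:ℤ)-N)^2) := by
    rw [mul_sum]; exact sum_congr rfl fun k _ => by ring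
  have key3 : (-1:ℂ)^N * P^2
      = ∑ k ∈ range (2*N+1), (-1:ℂ)^k * qb a (2*N) k * x^(((k:ℤ)-N)^2) := by
    refine mul_left_cancel₀ hxc ?_
    calc x^cN * ((-1:ℂ)^N * P^2) = (-1:ℂ)^N * x^cN * P^2 := by ring
      _ = ∑ k ∈ range (2*N+1), (-1:ℂ)^k * qb a (2*N) k * (x^cN * x^(((k:ℤ)-N)^2)) := key
      _ = _ := hfac
  have e' : ∀ k ∈ range (2*N+1),
      (-1:ℂ)^N * ((-1:ℂ)^k * qb a (2*N) k * x^(((k:ℤ)-N)^2))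
      = (-1:ℂ)^((k:ℤ)-(N:ℤ)) * qb a (2*N) k * x^(((k:ℤ)-N)^2) := by
    intro k hk
    have hinv : ((-1:ℂ)^N)⁻¹ = (-1:ℂ)^N := inv_eq_of_mul_eq_one_right hsign
    have : (-1:ℂ)^((k:ℤ)-(N:ℤ)) = (-1:ℂ)^k * (-1:ℂ)^N := by
      rw [sub_eq_add_neg, zpow_add₀ (by norm_num : (-1:ℂ) ≠ 0), zpow_neg,
        zpow_natCast, zpow_natCast, hinv]
    rw [this]; ring
  have key2 : P ^ 2 = ∑ k ∈ range (2*N+1),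
      (-1:ℂ) ^ ((k:ℤ) - (N:ℤ)) * qb a (2*N) k * x ^ (((k:ℤ) - N)^2) := by
    calc P ^ 2 = (-1:ℂ)^N * ((-1:ℂ)^N * P^2) := by rw [← mul_assoc, hsign, one_mul]
      _ = (-1:ℂ)^N * ∑ k ∈ range (2*N+1), (-1:ℂ)^k * qb a (2*N) k * x^(((k:ℤ)-N)^2) := by
          rw [key3]
      _ = _ := by rw [mul_sum]; exact sum_congr rfl e'
  -- Step 4: multiply by `D N` and reindex `k ↦ k - N`
  have lhsfold : ∏ j ∈ range N, ((1 - x ^ (2*j+2)) * (1 - x ^ (2*j+1)) ^ 2)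
      = (∏ i ∈ range N, (1 - a ^ (i+1))) * P ^ 2 := by
    rw [hP, ← prod_pow, ← prod_mul_distrib]
    refine prod_congr rfl fun j _ => ?_
    rw [ha, ← pow_mul, show 2*(j+1) = 2*j+2 from by ring]
  rw [lhsfold, key2, mul_sum]
  refine Finset.sum_nbij' (fun k => (k:ℤ) - N) (fun n => (n + N).toNat) ?_ ?_ ?_ ?_ ?_
  · intro k hk
    have := mem_range.mp hk
    simp only [Finset.mem_Icc]
    omega
  · intro n hn
    have := Finset.mem_Icc.mp hn
    simp only [mem_range]
    omega
  · intro k hk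
    have := mem_range.mp hk
    show ((k:ℤ) - N + N).toNat = k
    omega
  · intro n hn
    have := Finset.mem_Icc.mp hn
    show (((n + N).toNat : ℕ) : ℤ) - N = n
    omega
  · intro k hk
    have hk' := mem_range.mp hk
    show (∏ i ∈ range N, (1 - a ^ (i+1))) * ((-1:ℂ)^((k:ℤ)-(N:ℤ)) * qb a (2*N) k * x^(((k:ℤ)-N)^2))
      = (-1:ℂ)^((k:ℤ)-(N:ℤ)) * ((∏ i ∈ range N, (1 - a ^ (i+1))) * qb a (2*N) (((k:ℤ) - N) + N).toNat) * x^((((k:ℤ)-N))^2)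
    have : (((k:ℤ) - N) + N).toNat = k := by omega
    rw [this]
    ring

end JTP2

namespace JTP3
open JTP

/-- norm of a finite product of `1 - f i` bounded by `exp` of sum of norm bounds -/
lemma prod_norm_le (s : Finset ℕ) (f : ℕ → ℂ) :
    ‖∏ i ∈ s, (1 - f i)‖ ≤ Real.exp (∑ i ∈ s, ‖f i‖) := by
  rw [norm_prod]
  calc ∏ i ∈ s, ‖1 - f i‖ ≤ ∏ i ∈ s, Real.exp ‖f i‖ := by
        refine Finset.prod_le_prod (fun i _ => norm_nonneg _) (fun i _ => ?_)
        calc ‖1 - f i‖ ≤ ‖(1:ℂ)‖ + ‖f i‖ := norm_sub_le _ _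
          _ = 1 + ‖f i‖ := by rw [norm_one]
          _ ≤ Real.exp ‖f i‖ := by
              have := Real.add_one_le_exp (‖f i‖)
              linarith
    _ = Real.exp (∑ i ∈ s, ‖f i‖) := (Real.exp_sum s _).symm

/-- lower bound for products of `1 - b i` with `0 ≤ b i ≤ R < 1` -/
lemma prod_one_sub_ge (s : Finset ℕ) (b : ℕ → ℝ) (R : ℝ) (hR : R < 1)
    (hb : ∀ i ∈ s, 0 ≤ b i) (hbR : ∀ i ∈ s, b i ≤ R) :
    Real.exp (-(∑ i ∈ s, b i) / (1 - R)) ≤ ∏ i ∈ s, (1 - b i) := by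
  have h1R : 0 < 1 - R := by linarith
  have key : ∀ i ∈ s, Real.exp (-(b i) / (1 - R)) ≤ 1 - b i := by
    intro i hi
    have h0 : 0 ≤ b i := hb i hi
    have h1 : b i ≤ R := hbR i hi
    have hpos : 0 < 1 - b i := by linarith
    rw [← Real.exp_log hpos]
    apply Real.exp_le_exp.mpr
    have hlog : Real.log (1 - b i) ≥ -(b i / (1 - R)) := by
      have h2 : Real.log (1 - b i) = - Real.log (1 - b i)⁻¹ := by
        rw [Real.log_inv]; ring
      have h3 : Real.log (1 - b i)⁻¹ ≤ (1 - b i)⁻¹ - 1 :=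
        Real.log_le_sub_one_of_pos (by positivity)
      have h4 : (1 - b i)⁻¹ - 1 = b i / (1 - b i) := by
        field_simp
        ring
      have h5 : b i / (1 - b i) ≤ b i / (1 - R) := by
        apply div_le_div_of_nonneg_left h0 h1R
        linarith
      have h6 : Real.log (1 - b i)⁻¹ ≤ b i / (1 - R) := by
        rw [h4] at h3; linarith
      linarith [h2 ▸ neg_le_neg h6]
    calc -(b i) / (1 - R) = -(b i / (1 - R)) := by ring
      _ ≤ Real.log (1 - b i) := hlog
  calc Real.exp (-(∑ i ∈ s, b i) / (1 - R))
      = ∏ i ∈ s, Real.exp (-(b i) / (1 - R)) := by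
        rw [← Real.exp_sum]
        congr 1
        rw [← Finset.sum_div, ← Finset.sum_neg_distrib]
    _ ≤ ∏ i ∈ s, (1 - b i) := by
        refine Finset.prod_le_prod (fun i _ => (Real.exp_pos _).le) key

/-- products of `1 - f i` are close to 1 when the `f i` are small -/
lemma prod_sub_one_norm_le (s : Finset ℕ) (f : ℕ → ℂ) :
    ‖(∏ i ∈ s, (1 - f i)) - 1‖ ≤ (∏ i ∈ s, (1 + ‖f i‖)) - 1 := by
  classical
  induction s using Finset.induction_on with
  | empty => simp
  | insert _ _ hnotmem ih =>
    rename_i j t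
    rw [Finset.prod_insert hnotmem, Finset.prod_insert hnotmem]
    have expand : (1 - f j) * ∏ i ∈ t, (1 - f i) - 1
        = ((∏ i ∈ t, (1 - f i)) - 1) - f j * ∏ i ∈ t, (1 - f i) := by ring
    rw [expand]
    have h1 : ‖∏ i ∈ t, (1 - f i)‖ ≤ ∏ i ∈ t, (1 + ‖f i‖) := by
      rw [norm_prod]
      refine Finset.prod_le_prod (fun i _ => norm_nonneg _) (fun i _ => ?_)
      calc ‖1 - f i‖ ≤ ‖(1:ℂ)‖ + ‖f i‖ := norm_sub_le _ _
        _ = 1 + ‖f i‖ := by rw [norm_one]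
    have hprodnn : (0:ℝ) ≤ ∏ i ∈ t, (1 + ‖f i‖) :=
      Finset.prod_nonneg fun i _ => by positivity
    calc ‖((∏ i ∈ t, (1 - f i)) - 1) - f j * ∏ i ∈ t, (1 - f i)‖
        ≤ ‖(∏ i ∈ t, (1 - f i)) - 1‖ + ‖f j * ∏ i ∈ t, (1 - f i)‖ := norm_sub_le _ _
      _ ≤ ((∏ i ∈ t, (1 + ‖f i‖)) - 1) + ‖f j‖ * ∏ i ∈ t, (1 + ‖f i‖) := by
          rw [norm_mul]
          exact add_le_add ih (mul_le_mul_of_nonneg_left h1 (norm_nonneg _))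
      _ = (1 + ‖f j‖) * ∏ i ∈ t, (1 + ‖f i‖) - 1 := by ring

/-- partial geometric sums with offset -/
lemma geom_tail_sum_le {r : ℝ} (hr0 : 0 ≤ r) (hr1 : r < 1) (k c : ℕ) :
    ∑ i ∈ range k, r ^ (c + i + 1) ≤ r ^ (c + 1) / (1 - r) := by
  have h1r : 0 < 1 - r := by linarith
  have e : ∀ i ∈ range k, r ^ (c + i + 1) = r ^ (c+1) * r ^ i := by
    intro i _; rw [← pow_add]; congr 1; omega
  rw [sum_congr rfl e, ← mul_sum]
  have hgs : ∑ i ∈ range k, r ^ i ≤ (1 - r)⁻¹ := by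
    have hs : Summable (fun i : ℕ => r ^ i) := summable_geometric_of_lt_one hr0 hr1
    calc ∑ i ∈ range k, r ^ i ≤ ∑' i : ℕ, r ^ i :=
          Summable.sum_le_tsum _ (fun i _ => by positivity) hs
      _ = (1 - r)⁻¹ := tsum_geometric_of_lt_one hr0 hr1
  calc r ^ (c+1) * ∑ i ∈ range k, r ^ i ≤ r ^ (c+1) * (1-r)⁻¹ :=
        mul_le_mul_of_nonneg_left hgs (by positivity)
    _ = r ^ (c+1) / (1 - r) := by rw [div_eq_mul_inv]

end JTP3

namespace JTP4
open JTP JTP3 Filter Topology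

variable {a : ℂ}

/-- `D a N` : partial products of `∏ (1 - a^{i+1})` -/
noncomputable def D (a : ℂ) (N : ℕ) : ℂ := ∏ i ∈ range N, (1 - a ^ (i+1))

lemma factor_ne (hra : ‖a‖ < 1) (i : ℕ) : 1 - a ^ (i+1) ≠ 0 := by
  intro h
  have h2 : a ^ (i+1) = 1 := by linear_combination -h
  have : ‖a ^ (i+1)‖ < 1 := by
    rw [norm_pow]
    calc ‖a‖ ^ (i+1) ≤ ‖a‖ := pow_le_of_le_one (norm_nonneg a) hra.le (by omega)
      _ < 1 := hra
  rw [h2, norm_one] at this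
  exact lt_irrefl _ this

lemma D_ne (hra : ‖a‖ < 1) (N : ℕ) : D a N ≠ 0 :=
  Finset.prod_ne_zero_iff.mpr fun i _ => factor_ne hra i

lemma qb_formula (hra : ‖a‖ < 1) {m k : ℕ} (hk : k ≤ m) :
    qb a m k = (∏ i ∈ range k, (1 - a ^ (m - k + i + 1))) / D a k := by
  rw [eq_div_iff (D_ne hra k)]
  exact qb_prod a m k hk

noncomputable def S (a : ℂ) : ℝ := ‖a‖ / (1 - ‖a‖)
noncomputable def E (a : ℂ) : ℝ := Real.exp (S a)
noncomputable def del (a : ℂ) : ℝ := Real.exp (-(S a) / (1 - ‖a‖))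

lemma sum_norm_le (hra : ‖a‖ < 1) (k c : ℕ) :
    ∑ i ∈ range k, ‖a ^ (c + i + 1)‖ ≤ ‖a‖ ^ (c+1) / (1 - ‖a‖) := by
  have : ∀ i ∈ range k, ‖a ^ (c + i + 1)‖ = ‖a‖ ^ (c + i + 1) := fun i _ => norm_pow _ _
  rw [sum_congr rfl this]
  exact geom_tail_sum_le (norm_nonneg a) hra k c

lemma pow_div_le_S (hra : ‖a‖ < 1) (c : ℕ) : ‖a‖ ^ (c+1) / (1 - ‖a‖) ≤ S a := by
  rw [S]
  apply div_le_div_of_nonneg_right ?_ (by linarith)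
  · exact pow_le_of_le_one (norm_nonneg a) hra.le (by omega)

lemma normNum_le (hra : ‖a‖ < 1) (k c : ℕ) :
    ‖∏ i ∈ range k, (1 - a ^ (c + i + 1))‖ ≤ E a := by
  calc ‖∏ i ∈ range k, (1 - a ^ (c + i + 1))‖
      ≤ Real.exp (∑ i ∈ range k, ‖a ^ (c + i + 1)‖) := prod_norm_le _ _
    _ ≤ E a := Real.exp_le_exp.mpr ((sum_norm_le hra k c).trans (pow_div_le_S hra c))

lemma normD_le (hra : ‖a‖ < 1) (N : ℕ) : ‖D a N‖ ≤ E a := by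
  have := normNum_le hra N 0
  simpa [D] using this

lemma del_pos (a : ℂ) : 0 < del a := Real.exp_pos _

lemma normD_ge (hra : ‖a‖ < 1) (N : ℕ) : del a ≤ ‖D a N‖ := by
  have h1r : (0:ℝ) < 1 - ‖a‖ := by linarith
  have hb : ∀ i ∈ range N, (0:ℝ) ≤ ‖a‖ ^ (i+1) := fun i _ => by positivity
  have hbR : ∀ i ∈ range N, ‖a‖ ^ (i+1) ≤ ‖a‖ := fun i _ =>
    pow_le_of_le_one (norm_nonneg a) hra.le (by omega)
  have key : ∏ i ∈ range N, (1 - ‖a‖ ^ (i+1)) ≤ ‖D a N‖ := by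
    rw [D, norm_prod]
    refine Finset.prod_le_prod (fun i _ => ?_) (fun i _ => ?_)
    · have := hbR i (by assumption)
      linarith [hra]
    · calc 1 - ‖a‖ ^ (i+1) = ‖(1:ℂ)‖ - ‖a ^ (i+1)‖ := by rw [norm_one, norm_pow]
        _ ≤ ‖1 - a ^ (i+1)‖ := norm_sub_norm_le _ _
  refine le_trans ?_ key
  calc del a = Real.exp (-(S a) / (1 - ‖a‖)) := rfl
    _ ≤ Real.exp (-(∑ i ∈ range N, ‖a‖ ^ (i+1)) / (1 - ‖a‖)) := by
        apply Real.exp_le_exp.mpr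
        have hS : ∑ i ∈ range N, ‖a‖ ^ (i+1) ≤ S a := by
          have := (geom_tail_sum_le (norm_nonneg a) hra N 0).trans (pow_div_le_S hra 0)
          simpa using this
        exact (div_le_div_iff_of_pos_right h1r).mpr (neg_le_neg hS)
    _ ≤ ∏ i ∈ range N, (1 - ‖a‖ ^ (i+1)) :=
        prod_one_sub_ge _ _ ‖a‖ hra hb hbR

lemma E_pos (a : ℂ) : 0 < E a := Real.exp_pos _

/-- Uniform bound on `D a N * qb a (2N) k`. -/
lemma T_bound (hra : ‖a‖ < 1) (N k : ℕ) (hk : k ≤ 2*N) :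
    ‖D a N * qb a (2*N) k‖ ≤ E a * E a / del a := by
  rw [qb_formula hra hk, norm_mul, norm_div]
  rw [div_eq_mul_inv, ← mul_assoc, div_eq_mul_inv]
  have h1 : ‖D a N‖ * ‖∏ i ∈ range k, (1 - a ^ (2*N - k + i + 1))‖ ≤ E a * E a :=
    mul_le_mul (normD_le hra N) (normNum_le hra k (2*N - k)) (norm_nonneg _) (E_pos a).le
  have h2 : ‖D a k‖⁻¹ ≤ (del a)⁻¹ :=
    inv_anti₀ (del_pos a) (normD_ge hra k)
  exact mul_le_mul h1 h2 (by positivity) (mul_nonneg (E_pos a).le (E_pos a).le)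

/-- Multipliability of products `∏ (1 - c n)`. -/
lemma multipliable_one_sub (c : ℕ → ℂ) (hc : Summable c) (h1 : ∀ n, 1 - c n ≠ 0) :
    Multipliable (fun n => 1 - c n) := by
  apply Complex.multipliable_of_summable_log
  have htend : Tendsto (fun n => ‖c n‖) atTop (𝓝 0) := by
    have := hc.tendsto_atTop_zero
    simpa using this.norm
  have hev : ∀ᶠ n in atTop, ‖c n‖ ≤ 1/2 := by
    have := htend.eventually (eventually_le_nhds (by norm_num : (0:ℝ) < 1/2))
    exact this
  apply Summable.of_norm_bounded_eventually_nat (g := fun n => 3/2 * ‖c n‖)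
    (hc.norm.mul_left _)
  filter_upwards [hev] with n hn
  have : Complex.log (1 - c n) = Complex.log (1 + (- c n)) := by rw [sub_eq_add_neg]
  rw [this]
  have := Complex.norm_log_one_add_half_le_self (z := - c n) (by simpa using hn)
  simpa using this

lemma summable_pow_mul (hra : ‖a‖ < 1) (b c : ℕ) (hb : 1 ≤ b) :
    Summable (fun n : ℕ => a ^ (b*n + c + 1)) := by
  apply Summable.of_norm_bounded (g := fun n : ℕ => ‖a‖ ^ n)
    (summable_geometric_of_lt_one (norm_nonneg a) hra)
  intro n
  rw [norm_pow]
  exact pow_le_pow_of_le_one (norm_nonneg a) hra.le (by nlinarith)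

lemma multipliable_D (hra : ‖a‖ < 1) : Multipliable (fun i : ℕ => 1 - a ^ (i+1)) := by
  have := multipliable_one_sub (fun i => a ^ (i+1)) ?_ (factor_ne hra)
  · exact this
  · have := summable_pow_mul hra 1 0 le_rfl
    simpa using this

lemma tendsto_D (hra : ‖a‖ < 1) :
    Tendsto (D a) atTop (𝓝 (∏' i : ℕ, (1 - a ^ (i+1)))) :=
  (multipliable_D hra).hasProd.tendsto_prod_nat

lemma tprod_ne (hra : ‖a‖ < 1) : (∏' i : ℕ, (1 - a ^ (i+1))) ≠ 0 := by
  have h1 : del a ≤ ‖∏' i : ℕ, (1 - a ^ (i+1))‖ :=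
    ge_of_tendsto (tendsto_D hra).norm (Eventually.of_forall fun N => normD_ge hra N)
  intro h
  rw [h, norm_zero] at h1
  exact absurd h1 (not_le.mpr (del_pos a))

/-- The pointwise limit: `D a N * qb a (2N) (n+N) → 1`. -/
lemma T_tendsto (hra : ‖a‖ < 1) (n : ℤ) :
    Tendsto (fun N : ℕ => D a N * qb a (2*N) ((n + N).toNat)) atTop (𝓝 1) := by
  set L := ∏' i : ℕ, (1 - a ^ (i+1)) with hL
  have hL0 : L ≠ 0 := tprod_ne hra
  have hshift : Tendsto (fun N : ℕ => (n + N).toNat) atTop atTop :=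
    tendsto_atTop_atTop.mpr fun b => ⟨b + n.natAbs, fun N hN => by omega⟩
  have hD' : Tendsto (fun N : ℕ => D a ((n + (N:ℤ)).toNat)) atTop (𝓝 L) :=
    (tendsto_D hra).comp hshift
  -- the numerator product tends to 1
  set Numf : ℕ → ℂ := fun N =>
    ∏ i ∈ range ((n + N).toNat), (1 - a ^ (2*N - (n + N).toNat + i + 1)) with hNumf
  have hNum : Tendsto Numf atTop (𝓝 1) := by
    have hzero : Tendsto (fun N : ℕ => Numf N - 1) atTop (𝓝 0) := by
      apply squeeze_zero_norm' (a := fun N : ℕ =>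
        Real.exp (‖a‖ ^ ((N - n.natAbs) + 1) / (1 - ‖a‖)) - 1)
      · filter_upwards [eventually_ge_atTop n.natAbs] with N hN
        set k := (n + N).toNat with hk
        have hkle : 2*N - k ≥ N - n.natAbs := by omega
        calc ‖Numf N - 1‖ ≤ (∏ i ∈ range k, (1 + ‖a ^ (2*N - k + i + 1)‖)) - 1 :=
              prod_sub_one_norm_le _ _
          _ ≤ Real.exp (∑ i ∈ range k, ‖a ^ (2*N - k + i + 1)‖) - 1 := by
              have h := Finset.prod_le_prod (f := fun i => 1 + ‖a ^ (2*N - k + i + 1)‖)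
                (g := fun i => Real.exp ‖a ^ (2*N - k + i + 1)‖)
                (s := range k) (fun i _ => by positivity)
                (fun i _ => by linarith [Real.add_one_le_exp (‖a ^ (2*N - k + i + 1)‖)])
              rw [← Real.exp_sum] at h
              linarith
          _ ≤ Real.exp (‖a‖ ^ ((2*N - k) + 1) / (1 - ‖a‖)) - 1 := by
              have := sum_norm_le hra k (2*N - k)
              have := Real.exp_le_exp.mpr this
              linarith
          _ ≤ Real.exp (‖a‖ ^ ((N - n.natAbs) + 1) / (1 - ‖a‖)) - 1 := by
              have hp : ‖a‖ ^ ((2*N - k) + 1) ≤ ‖a‖ ^ ((N - n.natAbs) + 1) :=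
                pow_le_pow_of_le_one (norm_nonneg a) hra.le (by omega)
              have : ‖a‖ ^ ((2*N - k) + 1) / (1 - ‖a‖) ≤ ‖a‖ ^ ((N - n.natAbs) + 1) / (1 - ‖a‖) :=
                div_le_div_of_nonneg_right hp (by linarith) |>.trans_eq rfl
              have := Real.exp_le_exp.mpr this
              linarith
      · have hp : Tendsto (fun N : ℕ => ‖a‖ ^ ((N - n.natAbs) + 1)) atTop (𝓝 0) := by
          apply (tendsto_pow_atTop_nhds_zero_of_lt_one (norm_nonneg a) hra).comp
          exact tendsto_atTop_atTop.mpr fun b => ⟨b + n.natAbs, fun N hN => by omega⟩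
        have hdiv : Tendsto (fun N : ℕ => ‖a‖ ^ ((N - n.natAbs) + 1) / (1 - ‖a‖)) atTop (𝓝 0) := by
          simpa using hp.div_const (1 - ‖a‖)
        have hexp := (Real.continuous_exp.tendsto 0).comp hdiv
        have : Tendsto (fun N : ℕ => Real.exp (‖a‖ ^ ((N - n.natAbs) + 1) / (1 - ‖a‖)) - 1)
            atTop (𝓝 (Real.exp 0 - 1)) := hexp.sub_const 1
        simpa using this
    have := hzero.add_const 1
    simpa using this
  -- identify the sequence with `(D a N * Numf N) / D a ((n+N).toNat)` eventually
  have heq : ∀ᶠ N in atTop, D a N * qb a (2*N) ((n + N).toNat)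
      = D a N * Numf N / D a ((n + N).toNat) := by
    filter_upwards [eventually_ge_atTop n.natAbs] with N hN
    have hk : (n + N).toNat ≤ 2*N := by omega
    rw [qb_formula hra hk]
    field_simp
    rfl
  have hlim : Tendsto (fun N : ℕ => D a N * Numf N / D a ((n + (N:ℤ)).toNat))
      atTop (𝓝 (L * 1 / L)) :=
    ((tendsto_D hra).mul hNum).div hD' hL0
  rw [show L * 1 / L = 1 from by field_simp] at hlim
  refine Filter.Tendsto.congr' ?_ hlim
  filter_upwards [heq] with N h
  exact h.symm

end JTP4

open JTP JTP2 JTP3 JTP4 Filter Topology Finset in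
lemma JTP_main (q : ℂ) (hq : ‖q‖ < 1) :
    (∑' n : ℤ, (-1 : ℂ) ^ n * q ^ (n ^ 2)) =
      ∏' d : ℕ, (1 - q ^ (2 * (d + 1))) * (1 - q ^ (2 * (d + 1) - 1)) ^ 2 := by
  have hq' : ‖q‖ < 1 := hq
  rcases eq_or_ne q 0 with rfl | hx
  · -- trivial case q = 0
    have hts : (∑' n : ℤ, (-1 : ℂ) ^ n * (0:ℂ) ^ (n ^ 2)) = 1 := by
      rw [tsum_eq_single 0 ?_]
      · norm_num
      · intro n hn
        rw [zero_zpow (n^2) (pow_ne_zero 2 hn), mul_zero]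
    rw [hts]
    have : ∀ d : ℕ, (1 - (0:ℂ) ^ (2 * (d + 1))) * (1 - (0:ℂ) ^ (2 * (d + 1) - 1)) ^ 2 = 1 := by
      intro d
      rw [zero_pow (by omega), zero_pow (by omega)]
      norm_num
    rw [tprod_congr this, tprod_one]
  · -- main case q ≠ 0
    set x : ℂ := q with hxdef
    set a : ℂ := x ^ 2 with ha
    have hra : ‖a‖ < 1 := by
      rw [ha, norm_pow]
      calc ‖x‖ ^ 2 ≤ ‖x‖ := pow_le_of_le_one (norm_nonneg x) hq'.le (by omega)
        _ < 1 := hq'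
    set Cb : ℝ := E a * E a / del a with hCb
    have hCb0 : 0 ≤ Cb := by
      rw [hCb]
      have := E_pos a
      have := del_pos a
      positivity
    set F : ℕ → ℤ → ℂ := fun N n =>
      if n ∈ Finset.Icc (-(N:ℤ)) (N:ℤ) then
        (-1:ℂ)^n * (D a N * qb a (2*N) ((n + N).toNat)) * x^(n^2)
      else 0 with hF
    set bound : ℤ → ℝ := fun n => Cb * ‖x‖ ^ n.natAbs with hbound
    have hxnorm : ∀ n : ℤ, ‖x ^ (n^2)‖ = ‖x‖ ^ (n.natAbs ^ 2) := by
      intro n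
      have : x ^ (n^2) = x ^ (n.natAbs ^ 2 : ℕ) := by
        rw [← zpow_natCast]
        congr 1
        push_cast
        rw [sq_abs]
      rw [this, norm_pow]
    have hsummable : Summable bound := by
      apply Summable.mul_left
      apply Summable.of_nat_of_neg
      · have : (fun n : ℕ => ‖x‖ ^ ((n:ℤ)).natAbs) = fun n : ℕ => ‖x‖ ^ n := by
          funext n; simp
        rw [this]
        exact summable_geometric_of_lt_one (norm_nonneg x) hq'
      · have : (fun n : ℕ => ‖x‖ ^ ((-(n:ℤ))).natAbs) = fun n : ℕ => ‖x‖ ^ n := by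
          funext n; simp
        rw [this]
        exact summable_geometric_of_lt_one (norm_nonneg x) hq'
    have h_lim : ∀ n : ℤ, Tendsto (fun N => F N n) atTop (𝓝 ((-1:ℂ)^n * x^(n^2))) := by
      intro n
      have base : Tendsto (fun N : ℕ => (-1:ℂ)^n * (D a N * qb a (2*N) ((n + N).toNat)) * x^(n^2))
          atTop (𝓝 ((-1:ℂ)^n * 1 * x^(n^2))) :=
        (((T_tendsto hra n).const_mul ((-1:ℂ)^n)).mul_const (x^(n^2)))
      rw [mul_one] at base
      refine Filter.Tendsto.congr' ?_ base
      filter_upwards [eventually_ge_atTop n.natAbs] with N hN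
      rw [hF]
      simp only []
      rw [if_pos (by simp only [Finset.mem_Icc]; omega)]
    have h_bound : ∀ N : ℕ, ∀ n : ℤ, ‖F N n‖ ≤ bound n := by
      intro N n
      rw [hF, hbound]
      simp only []
      split_ifs with h
      · have hmem := Finset.mem_Icc.mp h
        have hk : (n + N).toNat ≤ 2*N := by omega
        rw [norm_mul, norm_mul, norm_zpow, norm_neg, norm_one, one_zpow, one_mul, hxnorm]
        have hT := T_bound hra N ((n + N).toNat) hk
        have hxp : ‖x‖ ^ (n.natAbs ^ 2) ≤ ‖x‖ ^ n.natAbs :=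
          pow_le_pow_of_le_one (norm_nonneg x) hq'.le (Nat.le_self_pow (by norm_num) _)
        exact mul_le_mul hT hxp (by positivity) hCb0
      · rw [norm_zero]
        have h1 : (0:ℝ) ≤ ‖x‖ ^ n.natAbs := by positivity
        exact mul_nonneg hCb0 h1
    have htsum : ∀ N : ℕ, (∑' n : ℤ, F N n)
        = ∏ j ∈ range N, ((1 - x ^ (2*j+2)) * (1 - x ^ (2*j+1)) ^ 2) := by
      intro N
      rw [tsum_eq_sum (s := Finset.Icc (-(N:ℤ)) (N:ℤ)) (fun n hn => by rw [hF]; exact if_neg hn)]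
      rw [finite_jtp x hx N]
      refine Finset.sum_congr rfl fun n hn => ?_
      rw [hF]
      simp only []
      rw [if_pos hn]
      rfl
    have hmain := tendsto_tsum_of_dominated_convergence hsummable h_lim
      (Eventually.of_forall h_bound)
    rw [show (fun N : ℕ => ∑' n : ℤ, F N n)
        = fun N : ℕ => ∏ j ∈ range N, ((1 - x ^ (2*j+2)) * (1 - x ^ (2*j+1)) ^ 2) from
      funext htsum] at hmain
    -- the infinite product side
    have m1 : Multipliable (fun d : ℕ => 1 - x ^ (2*d+2)) := by
      refine multipliable_one_sub _ ?_ ?_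
      · have := summable_pow_mul hq' 2 1 (by norm_num)
        refine this.congr fun n => ?_
        congr 1 <;> omega
      · intro d
        have := factor_ne hq' (2*d+1)
        rwa [show 2*d+1+1 = 2*d+2 from by omega] at this
    have m2 : Multipliable (fun d : ℕ => 1 - x ^ (2*d+1)) := by
      refine multipliable_one_sub _ ?_ ?_
      · have := summable_pow_mul hq' 2 0 (by norm_num)
        refine this.congr fun n => ?_
        congr 1 <;> omega
      · intro d
        have := factor_ne hq' (2*d)
        rwa [show 2*d+1 = 2*d+1 from rfl] at this
    have hmult : Multipliable (fun d : ℕ => (1 - x ^ (2*d+2)) * (1 - x ^ (2*d+1)) ^ 2) := by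
      have := m1.mul (m2.mul m2)
      refine this.congr fun d => ?_
      ring
    have hP : Tendsto (fun N : ℕ => ∏ j ∈ range N, ((1 - x ^ (2*j+2)) * (1 - x ^ (2*j+1)) ^ 2))
        atTop (𝓝 (∏' d : ℕ, (1 - x ^ (2*d+2)) * (1 - x ^ (2*d+1)) ^ 2)) :=
      hmult.hasProd.tendsto_prod_nat
    have := tendsto_nhds_unique hmain hP
    rw [this]
    refine tprod_congr fun d => ?_
    rw [show 2*(d+1)-1 = 2*d+1 from by omega, show 2*(d+1) = 2*d+2 from by omega]


/-- The Jacobi theta product identity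
`θ₀₁(0,τ) = Σ_{n∈ℤ} (−1)ⁿ qⁿ² = ∏_{d=1}^∞ (1−q^{2d})(1−q^{2d−1})²` for `|q| < 1`,
where `q = e^{πiτ}`. -/
theorem theta01_triple_product (q : ℂ) (hq : ‖q‖ < 1) :
    (∑' n : ℤ, (-1 : ℂ) ^ n * q ^ (n ^ 2)) =
      ∏' d : ℕ, (1 - q ^ (2 * (d + 1))) * (1 - q ^ (2 * (d + 1) - 1)) ^ 2 :=
  JTP_main q hq
end
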